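/- Let G be a strongly connected balanced digraph with Laplacian L and resistance r_{ij} := l†_{ii} + l†_{jj} − 2 l†_{ij}, where L† = (l†_{ij}) is the Moore–Penrose inverse of L. Then for every pair of distinct vertices i, j: r_{ij} + r_{ji} = (2/κ(G)) · det(L[{i,j}ᶜ,{i,j}ᶜ]), where κ(G) is the common cofactor of L. -/

import Mathlib

open Matrix Finset

/-- Out-degree of vertex `i` in the digraph with adjacency `A`. -/
def outdeg {n : ℕ} (A : Fin n → Fin n → Bool) (i : Fin n) : ℕ :=
  (Finset.univ.filter (fun j => A i j = true)).card

/-- In-degree of vertex `i`. -/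
def indeg {n : ℕ} (A : Fin n → Fin n → Bool) (i : Fin n) : ℕ :=
  (Finset.univ.filter (fun j => A j i = true)).card

/-- Laplacian matrix of a digraph: diagonal = out-degree, `-1` on edges, `0` otherwise. -/
def lap {n : ℕ} (A : Fin n → Fin n → Bool) : Matrix (Fin n) (Fin n) ℝ :=
  Matrix.of fun i j => if i = j then (outdeg A i : ℝ) else if A i j then -1 else 0

/-- Reachability by directed edges. -/
def Reach {n : ℕ} (A : Fin n → Fin n → Bool) : Fin n → Fin n → Prop :=
  Relation.ReflTransGen (fun a b => A a b = true)

def StronglyConnected {n : ℕ} (A : Fin n → Fin n → Bool) : Prop := ∀ i j, Reach A i j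

def IsBalanced {n : ℕ} (A : Fin n → Fin n → Bool) : Prop := ∀ i, indeg A i = outdeg A i

/-- In-degree of `v` in an edge set `T`. -/
def tIndeg {n : ℕ} (T : Finset (Fin n × Fin n)) (v : Fin n) : ℕ :=
  (T.filter (fun e => e.2 = v)).card

/-- Reachability using only the edges of `T`. -/
def ReachIn {n : ℕ} (T : Finset (Fin n × Fin n)) : Fin n → Fin n → Prop :=
  Relation.ReflTransGen (fun a b => (a, b) ∈ T)

/-- Spanning tree of the digraph rooted at `i` (spanning arborescence, edges directed
away from `i`): every vertex other than `i` has in-degree 1, `i` has in-degree 0, and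
every vertex is reachable from `i` (i.e. the subgraph is connected and acyclic). -/
def IsSpanningTree {n : ℕ} (A : Fin n → Fin n → Bool) (i : Fin n)
    (T : Finset (Fin n × Fin n)) : Prop :=
  (∀ e ∈ T, A e.1 e.2 = true) ∧ tIndeg T i = 0 ∧
    (∀ v, v ≠ i → tIndeg T v = 1) ∧ (∀ v, ReachIn T i v)

/-- Spanning forest with exactly two trees, rooted at `i` and `j`: two vertex-disjoint
arborescences partitioning the vertex set, with roots `i` and `j`. -/
def IsTwoForest {n : ℕ} (A : Fin n → Fin n → Bool) (i j : Fin n)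
    (T : Finset (Fin n × Fin n)) : Prop :=
  (∀ e ∈ T, A e.1 e.2 = true) ∧ tIndeg T i = 0 ∧ tIndeg T j = 0 ∧
    (∀ v, v ≠ i → v ≠ j → tIndeg T v = 1) ∧ (∀ v, ReachIn T i v ∨ ReachIn T j v)

/-- `det L[{i}ᶜ, {i}ᶜ]`: determinant of the principal submatrix deleting row/column `i`. -/
def minor1 {n : ℕ} (L : Matrix (Fin n) (Fin n) ℝ) (i : Fin n) : ℝ :=
  (L.submatrix (fun a : {x : Fin n // x ≠ i} => (a : Fin n))
    (fun a : {x : Fin n // x ≠ i} => (a : Fin n))).det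

/-- `det L[{i,j}ᶜ, {i,j}ᶜ]`: determinant of the principal submatrix deleting rows and
columns `i` and `j`. -/
def minor2 {n : ℕ} (L : Matrix (Fin n) (Fin n) ℝ) (i j : Fin n) : ℝ :=
  (L.submatrix (fun a : {x : Fin n // x ≠ i ∧ x ≠ j} => (a : Fin n))
    (fun a : {x : Fin n // x ≠ i ∧ x ≠ j} => (a : Fin n))).det

/-- `M` is the Moore–Penrose inverse of `L` (the four Penrose equations). -/
def IsMoorePenrose {n : ℕ} (L M : Matrix (Fin n) (Fin n) ℝ) : Prop :=
  L * M * L = L ∧ M * L * M = M ∧ (L * M)ᵀ = L * M ∧ (M * L)ᵀ = M * L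

/-- Resistance `r_{ij} = l†_{ii} + l†_{jj} - 2 l†_{ij}` computed from `M = L†`. -/
def resist {n : ℕ} (M : Matrix (Fin n) (Fin n) ℝ) (i j : Fin n) : ℝ :=
  M i i + M j j - 2 * M i j

/-- Directed path from `i` to `j`: a list of distinct vertices starting at `i`, ending at
`j`, consecutive ones joined by directed edges. -/
def IsPath {n : ℕ} (A : Fin n → Fin n → Bool) (i j : Fin n) (p : List (Fin n)) : Prop :=
  p.Chain' (fun a b => A a b = true) ∧ p.head? = some i ∧ p.getLast? = some j ∧ p.Nodup

/-- `s` is the edge set of a directed cycle of the digraph: the cyclically consecutive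
pairs of a nonempty duplicate-free vertex list, all being directed edges. -/
def IsCycle {n : ℕ} (A : Fin n → Fin n → Bool) (s : Finset (Fin n × Fin n)) : Prop :=
  ∃ c : List (Fin n), 2 ≤ c.length ∧ c.Nodup ∧
    (∀ p ∈ c.zip (c.rotate 1), A p.1 p.2 = true) ∧ s = (c.zip (c.rotate 1)).toFinset

/-- Vertex set of a cycle given by its edge set. -/
def cycVerts {n : ℕ} (s : Finset (Fin n × Fin n)) : Finset (Fin n) := s.image Prod.fst

/-- Directed cactus: strongly connected and every directed edge lies in exactly one
directed cycle. -/
def IsCactus {n : ℕ} (A : Fin n → Fin n → Bool) : Prop :=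
  StronglyConnected A ∧
    ∀ i j : Fin n, A i j = true → ∃! s : Finset (Fin n × Fin n), IsCycle A s ∧ (i, j) ∈ s

/-- Classical distance: length (number of edges) of a shortest directed path. -/
noncomputable def pdist {n : ℕ} (A : Fin n → Fin n → Bool) (i j : Fin n) : ℕ :=
  sInf {m : ℕ | ∃ p : List (Fin n), IsPath A i j p ∧ p.length = m + 1}

-- row sums are zero
lemma lap_row_sum {n : ℕ} (A : Fin n → Fin n → Bool) (hA : ∀ i, A i i = false) (i : Fin n) :
    ∑ b, lap A i b = 0 := by
  classical
  rw [← Finset.add_sum_erase _ _ (Finset.mem_univ i)]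
  have h1 : lap A i i = (outdeg A i : ℝ) := by simp [lap]
  have h2 : ∑ b ∈ Finset.univ.erase i, lap A i b = -(outdeg A i : ℝ) := by
    have : ∀ b ∈ Finset.univ.erase i, lap A i b = if A i b then (-1:ℝ) else 0 := by
      intro b hb
      have hbi : i ≠ b := fun h => (Finset.mem_erase.mp hb).1 h.symm
      simp [lap, hbi]
    rw [Finset.sum_congr rfl this, ← Finset.sum_filter]
    have hfe : (Finset.univ.erase i).filter (fun b => A i b = true)
        = Finset.univ.filter (fun b => A i b = true) := by
      ext b
      simp only [Finset.mem_filter, Finset.mem_erase, Finset.mem_univ, true_and, and_true]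
      constructor
      · tauto
      · intro hb
        refine ⟨fun hbi => ?_, hb⟩
        rw [hbi] at hb; rw [hA i] at hb; exact Bool.false_ne_true hb
    simp [hfe, outdeg]
  rw [h1, h2]; ring

-- column sums are zero (uses balance)
lemma lap_col_sum {n : ℕ} (A : Fin n → Fin n → Bool) (hA : ∀ i, A i i = false)
    (hbal : IsBalanced A) (j : Fin n) : ∑ a, lap A a j = 0 := by
  classical
  rw [← Finset.add_sum_erase _ _ (Finset.mem_univ j)]
  have h1 : lap A j j = (outdeg A j : ℝ) := by simp [lap]
  have h2 : ∑ a ∈ Finset.univ.erase j, lap A a j = -(indeg A j : ℝ) := by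
    have : ∀ a ∈ Finset.univ.erase j, lap A a j = if A a j then (-1:ℝ) else 0 := by
      intro a ha
      have haj : a ≠ j := (Finset.mem_erase.mp ha).1
      simp [lap, haj]
    rw [Finset.sum_congr rfl this, ← Finset.sum_filter]
    have hfe : (Finset.univ.erase j).filter (fun a => A a j = true)
        = Finset.univ.filter (fun a => A a j = true) := by
      ext a
      simp only [Finset.mem_filter, Finset.mem_erase, Finset.mem_univ, true_and, and_true]
      constructor
      · tauto
      · intro ha
        refine ⟨fun haj => ?_, ha⟩
        rw [haj] at ha; rw [hA j] at ha; exact Bool.false_ne_true ha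
    simp [hfe, indeg]
  rw [h1, h2, hbal j]; ring

-- mulVec at a point
lemma lap_mulVec_apply {n : ℕ} (A : Fin n → Fin n → Bool) (hA : ∀ i, A i i = false)
    (x : Fin n → ℝ) (p : Fin n) :
    (lap A).mulVec x p = (outdeg A p : ℝ) * x p
      - ∑ b ∈ Finset.univ.filter (fun b => A p b = true), x b := by
  classical
  have : (lap A).mulVec x p = ∑ b, lap A p b * x b := rfl
  rw [this, ← Finset.add_sum_erase _ _ (Finset.mem_univ p)]
  have h1 : lap A p p * x p = (outdeg A p : ℝ) * x p := by simp [lap]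
  have h2 : ∑ b ∈ Finset.univ.erase p, lap A p b * x b
      = -∑ b ∈ Finset.univ.filter (fun b => A p b = true), x b := by
    have hc : ∀ b ∈ Finset.univ.erase p, lap A p b * x b
        = if A p b then -x b else 0 := by
      intro b hb
      have hbp : p ≠ b := fun h => (Finset.mem_erase.mp hb).1 h.symm
      by_cases hb' : A p b <;> simp [lap, hbp, hb']
    rw [Finset.sum_congr rfl hc, ← Finset.sum_filter]
    have hfe : (Finset.univ.erase p).filter (fun b => A p b = true)
        = Finset.univ.filter (fun b => A p b = true) := by
      ext b
      simp only [Finset.mem_filter, Finset.mem_erase, Finset.mem_univ, true_and, and_true]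
      constructor
      · tauto
      · intro hb
        refine ⟨fun hbp => ?_, hb⟩
        rw [hbp] at hb; rw [hA p] at hb; exact Bool.false_ne_true hb
    rw [hfe]; simp
  rw [h1, h2]; ring

-- kernel of lap is constant vectors
lemma lap_ker_const {n : ℕ} (A : Fin n → Fin n → Bool) (hA : ∀ i, A i i = false)
    (hsc : StronglyConnected A) (x : Fin n → ℝ) (hx : (lap A).mulVec x = 0)
    (a b : Fin n) : x a = x b := by
  classical
  have : Nonempty (Fin n) := ⟨a⟩
  obtain ⟨m, hm⟩ := Finite.exists_max x
  -- step: from a max vertex, out-neighbors attain the max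
  have step : ∀ p c : Fin n, (∀ z, x z ≤ x p) → A p c = true → x c = x p := by
    intro p c hp hpc
    have h0 : (lap A).mulVec x p = 0 := by rw [hx]; rfl
    rw [lap_mulVec_apply A hA] at h0
    have hcard : ((Finset.univ.filter (fun b => A p b = true)).card : ℝ) = (outdeg A p : ℝ) := by
      simp [outdeg]
    have hsum : ∑ b ∈ Finset.univ.filter (fun b => A p b = true), x b
        = ∑ b ∈ Finset.univ.filter (fun b => A p b = true), x p := by
      rw [Finset.sum_const, nsmul_eq_mul]
      rw [← hcard] at h0
      linarith
    have hle : ∀ b ∈ Finset.univ.filter (fun b => A p b = true), x b ≤ x p :=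
      fun b _ => hp b
    have := (Finset.sum_eq_sum_iff_of_le hle).mp hsum
    exact this c (by simp [hpc])
  have reach : ∀ v, Reach A m v → x v = x m := by
    intro v hv
    induction hv with
    | refl => rfl
    | tail hab hbc ih =>
      rename_i b c
      have hb : ∀ z, x z ≤ x b := by intro z; rw [ih]; exact hm z
      rw [step b c hb hbc, ih]
  rw [reach a (hsc m a), reach b (hsc m b)]

-- transpose graph
lemma lap_transpose_eq {n : ℕ} (A : Fin n → Fin n → Bool) (hbal : IsBalanced A) :
    lap (fun a b => A b a) = (lap A)ᵀ := by
  ext p q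
  by_cases h : p = q
  · subst h
    simpa [lap, outdeg, indeg] using hbal p
  · have h' : q ≠ p := fun hh => h hh.symm
    simp [lap, transpose_apply, h, h']

lemma lap_leftker_const {n : ℕ} (A : Fin n → Fin n → Bool) (hA : ∀ i, A i i = false)
    (hsc : StronglyConnected A) (hbal : IsBalanced A) (y : Fin n → ℝ)
    (hy : (lap A)ᵀ.mulVec y = 0) (a b : Fin n) : y a = y b := by
  have hsc' : StronglyConnected (fun a b => A b a) := by
    intro p q
    exact (Relation.reflTransGen_swap).mpr (hsc q p)
  refine lap_ker_const (fun a b => A b a) (fun i => hA i) hsc' y ?_ a b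
  rw [lap_transpose_eq A hbal]; exact hy

-- determinant with a single column replaced
lemma det_updateColumn_single {m : Type*} [Fintype m] [DecidableEq m]
    (M : Matrix m m ℝ) (i : m) :
    (M.updateCol i (Pi.single i 1)).det =
      (M.submatrix (fun a : {x : m // x ≠ i} => (a : m))
        (fun a : {x : m // x ≠ i} => (a : m))).det := by
  classical
  set M' := M.updateCol i (Pi.single i 1) with hM'
  let e : {x : m // x = i} ⊕ {x : m // ¬ x = i} ≃ m := Equiv.sumCompl (· = i)
  rw [← Matrix.det_submatrix_equiv_self e]
  have hblock : M'.submatrix e e =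
      Matrix.fromBlocks 1 (Matrix.of fun (a : {x : m // x = i}) (b : {x : m // ¬ x = i}) => M (a : m) (b : m))
        0 (M.submatrix (fun a : {x : m // ¬ x = i} => (a : m)) (fun a => (a : m))) := by
    ext a b
    cases a with
    | inl a =>
      cases b with
      | inl b =>
        have ha : (a : m) = i := a.2
        have hb : (b : m) = i := b.2
        have hab : a = b := Subtype.ext (ha.trans hb.symm)
        simp [hM', e, Matrix.submatrix_apply, Equiv.sumCompl_apply_inl, Equiv.sumCompl_apply_inr, hab, ha, hb, Matrix.updateCol_apply,
          Matrix.one_apply]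
      | inr b =>
        have ha : (a : m) = i := a.2
        have hb : (b : m) ≠ i := b.2
        simp [hM', e, Matrix.submatrix_apply, Equiv.sumCompl_apply_inl, Equiv.sumCompl_apply_inr, ha, hb, Matrix.updateCol_apply]
    | inr a =>
      cases b with
      | inl b =>
        have ha : (a : m) ≠ i := a.2
        have hb : (b : m) = i := b.2
        simp [hM', e, Matrix.submatrix_apply, Equiv.sumCompl_apply_inl, Equiv.sumCompl_apply_inr, ha, hb, Matrix.updateCol_apply,
          Pi.single_eq_of_ne ha]
      | inr b =>
        have hb : (b : m) ≠ i := b.2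
        simp [hM', e, Matrix.submatrix_apply, Equiv.sumCompl_apply_inl, Equiv.sumCompl_apply_inr, hb, Matrix.updateCol_apply]
  rw [hblock, Matrix.det_fromBlocks_zero₂₁, Matrix.det_one, one_mul]

lemma det_updateRow_single {m : Type*} [Fintype m] [DecidableEq m]
    (M : Matrix m m ℝ) (i : m) :
    (M.updateRow i (Pi.single i 1)).det =
      (M.submatrix (fun a : {x : m // x ≠ i} => (a : m))
        (fun a : {x : m // x ≠ i} => (a : m))).det := by
  have h : (M.updateRow i (Pi.single i 1))ᵀ = Mᵀ.updateCol i (Pi.single i 1) :=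
    (Matrix.updateCol_transpose (M := M) (i := i) (b := Pi.single i 1)).symm
  rw [← Matrix.det_transpose, h, det_updateColumn_single,
    ← Matrix.det_transpose (M.submatrix _ _)]
  rfl

lemma lap_mulVec_one {n : ℕ} (A : Fin n → Fin n → Bool) (hA : ∀ i, A i i = false) :
    (lap A).mulVec (fun _ => (1:ℝ)) = 0 := by
  funext p
  have : (lap A).mulVec (fun _ => (1:ℝ)) p = ∑ b, lap A p b := by
    simp [Matrix.mulVec, dotProduct]
  rw [this, lap_row_sum A hA]; rfl

lemma lap_det_zero {n : ℕ} [NeZero n] (A : Fin n → Fin n → Bool) (hA : ∀ i, A i i = false) :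
    (lap A).det = 0 := by
  rw [← Matrix.exists_mulVec_eq_zero_iff]
  refine ⟨fun _ => 1, ?_, lap_mulVec_one A hA⟩
  intro h
  have := congrFun h ⟨0, Nat.pos_of_ne_zero (NeZero.ne n)⟩
  simpa using this

-- adjugate of lap is a constant matrix
lemma adjugate_lap_const {n : ℕ} [NeZero n] (A : Fin n → Fin n → Bool)
    (hA : ∀ i, A i i = false) (hsc : StronglyConnected A) (hbal : IsBalanced A)
    (a b c d : Fin n) : (lap A).adjugate a b = (lap A).adjugate c d := by
  classical
  set L := lap A with hL
  have hdet : L.det = 0 := lap_det_zero A hA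
  have hmul : L * L.adjugate = 0 := by
    rw [Matrix.mul_adjugate, hdet, zero_smul]
  have hmul' : L.adjugate * L = 0 := by
    rw [Matrix.adjugate_mul, hdet, zero_smul]
  -- columns of adjugate are constant
  have hcol : ∀ (q p p' : Fin n), L.adjugate p q = L.adjugate p' q := by
    intro q p p'
    have hker : L.mulVec (fun r => L.adjugate r q) = 0 := by
      funext r
      have : L.mulVec (fun r => L.adjugate r q) r = (L * L.adjugate) r q := by
        simp [Matrix.mul_apply, Matrix.mulVec, dotProduct]
      rw [this, hmul]; rfl
    exact lap_ker_const A hA hsc _ hker p p'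
  -- rows of adjugate are constant
  have hrow : ∀ (p q q' : Fin n), L.adjugate p q = L.adjugate p q' := by
    intro p q q'
    have hker : Lᵀ.mulVec (fun r => L.adjugate p r) = 0 := by
      funext r
      have : Lᵀ.mulVec (fun r => L.adjugate p r) r = (L.adjugate * L) p r := by
        simp [Matrix.mul_apply, Matrix.mulVec, dotProduct, Matrix.transpose_apply,
          mul_comm]
      rw [this, hmul']; rfl
    exact lap_leftker_const A hA hsc hbal _ hker q q'
  rw [hcol b a c, hrow c b d]

lemma adjugate_diag_eq_minor1 {n : ℕ} (L : Matrix (Fin n) (Fin n) ℝ) (k : Fin n) :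
    L.adjugate k k = minor1 L k := by
  rw [Matrix.adjugate_apply, det_updateRow_single]; rfl

lemma minor1_eq {n : ℕ} [NeZero n] (A : Fin n → Fin n → Bool)
    (hA : ∀ i, A i i = false) (hsc : StronglyConnected A) (hbal : IsBalanced A)
    (k k' : Fin n) : minor1 (lap A) k = minor1 (lap A) k' := by
  rw [← adjugate_diag_eq_minor1, ← adjugate_diag_eq_minor1]
  exact adjugate_lap_const A hA hsc hbal k k k' k'

-- sum over Fin n splits into k and the subtype complement
lemma sum_split {n : ℕ} (k : Fin n) (f : Fin n → ℝ) :
    ∑ a, f a = f k + ∑ a : {x : Fin n // x ≠ k}, f (a : Fin n) := by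
  classical
  rw [← Finset.add_sum_erase _ _ (Finset.mem_univ k)]
  congr 1
  exact (Finset.sum_subtype (p := fun x => x ≠ k) (Finset.univ.erase k) (by simp) f)

lemma minor1_ne_zero {n : ℕ} (A : Fin n → Fin n → Bool)
    (hA : ∀ i, A i i = false) (hsc : StronglyConnected A) (hbal : IsBalanced A)
    (k : Fin n) : minor1 (lap A) k ≠ 0 := by
  classical
  intro h0
  set L := lap A with hLdef
  set S := L.submatrix (fun a : {x : Fin n // x ≠ k} => (a : Fin n))
    (fun a : {x : Fin n // x ≠ k} => (a : Fin n)) with hS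
  obtain ⟨v, hv0, hv⟩ := Matrix.exists_mulVec_eq_zero_iff.mpr h0
  set x : Fin n → ℝ := fun a => if h : a ≠ k then v ⟨a, h⟩ else 0 with hx
  have hxk : x k = 0 := by simp [hx]
  have hxa : ∀ (a : {y : Fin n // y ≠ k}), x (a : Fin n) = v a := by
    intro a; simp [hx, a.2]
  -- mulVec of x at a ≠ k vanishes
  have hrow : ∀ (a : {y : Fin n // y ≠ k}), L.mulVec x (a : Fin n) = 0 := by
    intro a
    have : L.mulVec x (a : Fin n) = ∑ b, L (a : Fin n) b * x b := rfl
    rw [this, sum_split k]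
    have h1 : L (a : Fin n) k * x k = 0 := by rw [hxk]; ring
    have h2 : ∑ b : {y : Fin n // y ≠ k}, L (a : Fin n) (b : Fin n) * x (b : Fin n)
        = S.mulVec v a := by
      apply Finset.sum_congr rfl
      intro b _
      rw [hxa b]; rfl
    rw [h1, h2, hv]; simp
  -- total sum of mulVec is zero by column sums
  have htot : ∑ a, L.mulVec x a = 0 := by
    have hmv : ∀ a, L.mulVec x a = ∑ b, L a b * x b := fun a => rfl
    have : ∑ a, L.mulVec x a = ∑ b, (∑ a, L a b) * x b := by
      simp only [hmv]
      rw [Finset.sum_comm]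
      apply Finset.sum_congr rfl
      intro b _
      rw [Finset.sum_mul]
    rw [this]
    apply Finset.sum_eq_zero
    intro b _
    rw [lap_col_sum A hA hbal b, zero_mul]
  have hk : L.mulVec x k = 0 := by
    rw [sum_split k] at htot
    have : ∑ a : {y : Fin n // y ≠ k}, L.mulVec x (a : Fin n) = 0 :=
      Finset.sum_eq_zero fun a _ => hrow a
    rw [this] at htot; linarith
  have hker : L.mulVec x = 0 := by
    funext a
    by_cases h : a = k
    · subst h; exact hk
    · exact hrow ⟨a, h⟩
  have hconst : ∀ a, x a = 0 := by
    intro a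
    rw [lap_ker_const A hA hsc x hker a k, hxk]
  apply hv0
  funext b
  have := hconst (b : Fin n)
  rw [hxa b] at this
  exact this

lemma lap_mulVec_sum {n : ℕ} (A : Fin n → Fin n → Bool) (hA : ∀ i, A i i = false)
    (hbal : IsBalanced A) (x : Fin n → ℝ) : ∑ a, (lap A).mulVec x a = 0 := by
  classical
  set L := lap A with hL
  have hmv : ∀ a, L.mulVec x a = ∑ b, L a b * x b := fun a => rfl
  have : ∑ a, L.mulVec x a = ∑ b, (∑ a, L a b) * x b := by
    simp only [hmv]
    rw [Finset.sum_comm]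
    apply Finset.sum_congr rfl
    intro b _
    rw [Finset.sum_mul]
  rw [this]
  apply Finset.sum_eq_zero
  intro b _
  rw [lap_col_sum A hA hbal b, zero_mul]


/-- `r_{ij} + r_{ji} = (2/κ(G)) det L[{i,j}ᶜ,{i,j}ᶜ]`. -/
theorem stmt_6 {n : ℕ} (A : Fin n → Fin n → Bool) (hA : ∀ i, A i i = false)
    (hsc : StronglyConnected A) (hbal : IsBalanced A)
    (M : Matrix (Fin n) (Fin n) ℝ) (hM : IsMoorePenrose (lap A) M)
    (i j : Fin n) (hij : i ≠ j) :
    ∀ k : Fin n,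
      resist M i j + resist M j i = 2 / minor1 (lap A) k * minor2 (lap A) i j := by
  classical
  intro k
  have hn : NeZero n := ⟨by rintro rfl; exact i.elim0⟩
  obtain ⟨h1, h2, h3, h4⟩ := hM
  set L := lap A with hL
  set ev : Fin n → ℝ := Pi.single i 1 - Pi.single j 1 with hev
  set κ : ℝ := minor1 L j with hκ
  have hκ0 : κ ≠ 0 := minor1_ne_zero A hA hsc hbal j
  let ii : {x : Fin n // x ≠ j} := ⟨i, hij⟩
  set S := L.submatrix (fun a : {x : Fin n // x ≠ j} => (a : Fin n))
    (fun a : {x : Fin n // x ≠ j} => (a : Fin n)) with hS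
  set y : {x : Fin n // x ≠ j} → ℝ := S.cramer (Pi.single ii 1) with hy
  have hSy := Matrix.mulVec_cramer S (Pi.single ii (1:ℝ))
  have hSdet : S.det = κ := rfl
  set x : Fin n → ℝ := fun a => if h : a ≠ j then y ⟨a, h⟩ else 0 with hx
  have hxj : x j = 0 := by simp [hx]
  have hxa : ∀ (a : {z : Fin n // z ≠ j}), x (a : Fin n) = y a := by
    intro a; simp [hx, a.2]
  -- L x = κ • ev
  have hLx : L.mulVec x = κ • ev := by
    have hrow : ∀ (a : {z : Fin n // z ≠ j}),
        L.mulVec x (a : Fin n) = κ * (if (a : Fin n) = i then 1 else 0) := by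
      intro a
      have h0 : L.mulVec x (a : Fin n) = ∑ b, L (a : Fin n) b * x b := rfl
      rw [h0, sum_split j]
      have h1 : L (a : Fin n) j * x j = 0 := by rw [hxj]; ring
      have h2 : ∑ b : {z : Fin n // z ≠ j}, L (a : Fin n) (b : Fin n) * x (b : Fin n)
          = S.mulVec y a := by
        apply Finset.sum_congr rfl
        intro b _
        rw [hxa b]; rfl
      rw [h1, h2, hSy, hSdet]
      have hps : Pi.single (M := fun _ => ℝ) ii 1 a = if (a : Fin n) = i then 1 else 0 := by
        by_cases hai : (a : Fin n) = i
        · have hae : a = ii := Subtype.ext hai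
          simp [hae, hai, Pi.single_apply, ii]
        · have hae : a ≠ ii := fun h => hai (congrArg Subtype.val h)
          simp [hae, hai, Pi.single_apply]
      simp only [Pi.smul_apply, smul_eq_mul, hps, zero_add]
    funext a
    by_cases h : a = j
    · subst h
      have htot := lap_mulVec_sum A hA hbal x
      rw [sum_split a] at htot
      have hsub : ∑ b : {z : Fin n // z ≠ a}, L.mulVec x (b : Fin n) = κ := by
        rw [Finset.sum_congr rfl (fun b _ => hrow b)]
        rw [← Finset.mul_sum]
        have : ∑ b : {z : Fin n // z ≠ a}, (if (b : Fin n) = i then (1:ℝ) else 0) = 1 := by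
          rw [Finset.sum_eq_single (⟨i, Ne.symm (by exact fun h' => hij h'.symm)⟩ :
            {z : Fin n // z ≠ a})]
          · simp
          · intro b _ hb
            have : (b : Fin n) ≠ i := fun hbi => hb (Subtype.ext hbi)
            simp [this]
          · simp
        rw [this, mul_one]
      rw [hsub] at htot
      have : L.mulVec x a = -κ := by linarith
      rw [this]
      have hji : a ≠ i := fun h' => hij h'.symm
      simp [hev, Pi.single_apply, hji, if_neg hji]
    · rw [hrow ⟨a, h⟩]
      simp [hev, Pi.single_apply, h]
  -- P := M * L satisfies P ev = ev
  set P := M * L with hP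
  have hPt : Pᵀ = P := h4
  have hLone : L.mulVec (fun _ => (1:ℝ)) = 0 := lap_mulVec_one A hA
  have hPone : P.mulVec (fun _ => (1:ℝ)) = 0 := by
    rw [hP, ← Matrix.mulVec_mulVec, hLone, Matrix.mulVec_zero]
  have honeP : (fun _ => (1:ℝ)) ᵥ* P = 0 := by
    rw [← hPt, Matrix.vecMul_transpose, hPone]
  have hLP : L * P = L := by rw [hP, ← Matrix.mul_assoc, h1]
  have hPe : P.mulVec ev = ev := by
    set d : Fin n → ℝ := ev - P.mulVec ev with hd
    have hLd : L.mulVec d = 0 := by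
      rw [hd, Matrix.mulVec_sub, Matrix.mulVec_mulVec, hLP, sub_self]
    have hdc : ∀ a b, d a = d b := lap_ker_const A hA hsc d hLd
    have hsum : ∑ a, d a = 0 := by
      rw [hd]
      have h5 : ∑ a, (ev - P.mulVec ev) a = ∑ a, ev a - ∑ a, P.mulVec ev a := by
        simp [Finset.sum_sub_distrib]
      rw [h5]
      have h6 : ∑ a, ev a = 0 := by
        simp [hev, Finset.sum_sub_distrib, Pi.single_apply]
      have h7 : ∑ a, P.mulVec ev a = 0 := by
        have : ∑ a, P.mulVec ev a = (fun _ => (1:ℝ)) ⬝ᵥ P.mulVec ev := by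
          simp [dotProduct]
        rw [this, Matrix.dotProduct_mulVec, honeP, zero_dotProduct]
      rw [h6, h7]; ring
    have hdi : d i = 0 := by
      have hc : ∑ a, d a = (n : ℝ) * d i := by
        rw [show (∑ a, d a) = ∑ _a : Fin n, d i from Finset.sum_congr rfl fun a _ => hdc a i]
        simp [Finset.card_univ, mul_comm]
      rw [hc] at hsum
      have hn0 : (n : ℝ) ≠ 0 := Nat.cast_ne_zero.mpr (NeZero.ne n)
      exact (mul_eq_zero.mp hsum).resolve_left hn0
    have hd0 : d = 0 := by
      funext a
      rw [hdc a i, hdi]; rfl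
    have hsub : ev - P.mulVec ev = 0 := by rw [← hd]; exact hd0
    exact (sub_eq_zero.mp hsub).symm
  -- main identity: κ * q = y ii
  set q : ℝ := ev ⬝ᵥ M.mulVec ev with hq
  have hmain : κ * q = y ii := by
    have hMe : κ • M.mulVec ev = P.mulVec x := by
      rw [← Matrix.mulVec_smul, ← hLx, hP, Matrix.mulVec_mulVec]
    have hevP : ev ᵥ* P = ev := by
      rw [← hPt, Matrix.vecMul_transpose, hPe]
    calc κ * q = ev ⬝ᵥ (κ • M.mulVec ev) := by
          rw [hq, dotProduct_smul, smul_eq_mul]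
      _ = ev ⬝ᵥ P.mulVec x := by rw [hMe]
      _ = (ev ᵥ* P) ⬝ᵥ x := by rw [Matrix.dotProduct_mulVec]
      _ = ev ⬝ᵥ x := by rw [hevP]
      _ = x i - x j := by
          simp [hev, sub_dotProduct, single_dotProduct]
      _ = y ii := by rw [hxj, hxa ii, sub_zero]
  -- y ii = minor2 L i j
  have hyii : y ii = minor2 L i j := by
    rw [hy, Matrix.cramer_apply, det_updateColumn_single]
    let f : {x : Fin n // x ≠ i ∧ x ≠ j} ≃ {z : {x : Fin n // x ≠ j} // z ≠ ii} :=
      { toFun := fun a => ⟨⟨a.1, a.2.2⟩, fun h => a.2.1 (congrArg Subtype.val h)⟩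
        invFun := fun z => ⟨z.1.1, ⟨fun h => z.2 (Subtype.ext h), z.1.2⟩⟩
        left_inv := fun a => rfl
        right_inv := fun z => rfl }
    rw [← Matrix.det_submatrix_equiv_self f]
    rfl
  -- q in terms of M entries
  have hq2 : q = M i i + M j j - M i j - M j i := by
    rw [hq, hev]
    simp [sub_dotProduct, single_dotProduct, Matrix.mulVec_sub,
      Matrix.mulVec_single]
    ring
  have hminor : minor1 L k = κ := by rw [hκ]; exact minor1_eq A hA hsc hbal k j
  rw [hminor]
  have hm2 : minor2 L i j = κ * q := hyii.symm.trans hmain.symm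
  rw [hm2]
  rw [resist, resist, hq2]
  field_simp
  ring
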